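/- A partial transformation α of the chain {1, ..., n} is oriented if and only if every restriction of α to a four-element subset of its domain is oriented. -/

import Mathlib

/-- A sequence `a : Fin t → Fin n` is cyclic if at most one index `i`
satisfies `a i > a (i+1)` (indices mod `t`). -/
def IsCyclicSeq {n t : ℕ} (a : Fin t → Fin n) : Prop :=
  (Finset.univ.filter fun i : Fin t =>
    a ⟨(i.val + 1) % t, Nat.mod_lt _ i.pos⟩ < a i).card ≤ 1

/-- A sequence is anti-cyclic if at most one index `i`
satisfies `a i < a (i+1)` (indices mod `t`). -/
def IsAntiCyclicSeq {n t : ℕ} (a : Fin t → Fin n) : Prop :=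
  (Finset.univ.filter fun i : Fin t =>
    a i < a ⟨(i.val + 1) % t, Nat.mod_lt _ i.pos⟩).card ≤ 1

/-- A sequence is oriented if it is cyclic or anti-cyclic. -/
def IsOrientedSeq {n t : ℕ} (a : Fin t → Fin n) : Prop :=
  IsCyclicSeq a ∨ IsAntiCyclicSeq a

section OrientedAux

open Finset OrderDual

variable {α : Type*} [LinearOrder α]

/-- number of cyclic descents -/
def dCnt {t : ℕ} (a : Fin t → α) : ℕ :=
  (Finset.univ.filter fun i : Fin t =>
    a ⟨(i.val + 1) % t, Nat.mod_lt _ i.pos⟩ < a i).card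

/-- number of cyclic ascents -/
def uCnt {t : ℕ} (a : Fin t → α) : ℕ :=
  (Finset.univ.filter fun i : Fin t =>
    a i < a ⟨(i.val + 1) % t, Nat.mod_lt _ i.pos⟩).card

lemma add_one_val' {t : ℕ} [NeZero t] (i : Fin t) : (i + 1).val = (i.val + 1) % t := by
  rw [Fin.add_def]; simp [Fin.val_one', Nat.add_mod_mod]

lemma mk_mod_eq_add_one {t : ℕ} [NeZero t] (i : Fin t) :
    (⟨(i.val + 1) % t, Nat.mod_lt _ i.pos⟩ : Fin t) = i + 1 := by
  apply Fin.ext; rw [add_one_val']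

lemma mod_ite' (x n : ℕ) (h : x < n) : (x + 1) % n = if x + 1 = n then 0 else x + 1 := by
  split_ifs with h'
  · rw [h', Nat.mod_self]
  · rw [Nat.mod_eq_of_lt (by omega)]

lemma dCnt_eq {t : ℕ} [NeZero t] (a : Fin t → α) :
    dCnt a = (Finset.univ.filter fun i => a (i + 1) < a i).card := by
  unfold dCnt; congr 1; apply filter_congr; intro x _; rw [mk_mod_eq_add_one]

lemma uCnt_eq {t : ℕ} [NeZero t] (a : Fin t → α) :
    uCnt a = (Finset.univ.filter fun i => a i < a (i + 1)).card := by
  unfold uCnt; congr 1; apply filter_congr; intro x _; rw [mk_mod_eq_add_one]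

lemma uCnt_dual {t : ℕ} (a : Fin t → α) : dCnt (⇑toDual ∘ a) = uCnt a := by
  unfold dCnt uCnt; congr 1

lemma dCnt_dual {t : ℕ} (a : Fin t → α) : uCnt (⇑toDual ∘ a) = dCnt a := by
  unfold dCnt uCnt; congr 1

lemma dCnt_add_uCnt_le {t : ℕ} (a : Fin t → α) : dCnt a + uCnt a ≤ t := by
  unfold dCnt uCnt
  rw [← Finset.card_union_of_disjoint]
  · calc _ ≤ (Finset.univ : Finset (Fin t)).card :=
        Finset.card_le_card (Finset.subset_univ _)
    _ = t := by simp
  · rw [Finset.disjoint_left]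
    intro i hi hi'
    simp only [Finset.mem_filter] at hi hi'
    exact absurd hi'.2 (not_lt.2 hi.2.le)

lemma dCnt_sum {t : ℕ} [NeZero t] (a : Fin t → α) :
    dCnt a = ∑ i : Fin t, if a (i + 1) < a i then 1 else 0 := by
  rw [dCnt_eq, Finset.card_filter]

lemma sA_val {S : ℕ} (k : Fin (S+2)) (i : Fin (S+1)) :
    (k.succAbove i).val = if i.val < k.val then i.val else i.val + 1 := by
  rw [Fin.succAbove]
  split
  · next h => simp only [Fin.coe_castSucc]; rw [if_pos]; exact h
  · next h =>
    simp only [Fin.val_succ]; rw [if_neg]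
    simpa [Fin.lt_def] using h

lemma SA1 {S : ℕ} (k : Fin (S+2)) (i : Fin (S+1))
    (h : k.succAbove i + 1 ≠ k) :
    k.succAbove (i + 1) = k.succAbove i + 1 := by
  have hval : ((k.succAbove i + 1 : Fin (S+2))).val ≠ k.val := fun hv => h (Fin.ext hv)
  have hs := sA_val k i
  have hsl := (k.succAbove i).isLt
  apply Fin.ext
  rw [sA_val, add_one_val', add_one_val', hs]
  rw [add_one_val', hs] at hval
  rw [mod_ite' _ _ i.isLt]
  rw [mod_ite' _ _ (by omega : (if i.val < k.val then i.val else i.val + 1) < S + 2)] at hval ⊢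
  have hi := i.isLt
  have hk := k.isLt
  split_ifs at hval ⊢ <;> omega

lemma SA2 {S : ℕ} (k : Fin (S+2)) (i : Fin (S+1))
    (h : k.succAbove i + 1 = k) :
    k.succAbove (i + 1) = k + 1 := by
  have hval : ((k.succAbove i + 1 : Fin (S+2))).val = k.val := congrArg Fin.val h
  have hs := sA_val k i
  apply Fin.ext
  rw [sA_val, add_one_val', add_one_val']
  rw [add_one_val', hs] at hval
  rw [mod_ite' _ _ i.isLt]
  rw [mod_ite' _ _ (by omega : (if i.val < k.val then i.val else i.val + 1) < S + 2)] at hval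
  rw [mod_ite' _ _ k.isLt]
  have hi := i.isLt
  have hk := k.isLt
  split_ifs at hval ⊢ <;> omega

lemma removal_id_d {S : ℕ} (f : Fin (S+2) → α) (k : Fin (S+2)) :
    dCnt (f ∘ k.succAbove) + (if f k < f (k-1) then 1 else 0)
      + (if f (k+1) < f k then 1 else 0)
    = dCnt f + (if f (k+1) < f (k-1) then 1 else 0) := by
  have hne : (k - 1 : Fin (S+2)) ≠ k := by
    intro hcon
    have h1 : k - 1 + 1 = k + 1 := by rw [hcon]
    rw [sub_add_cancel] at h1
    have := congrArg Fin.val h1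
    rw [add_one_val'] at this
    have hk := k.isLt
    rw [mod_ite' _ _ hk] at this
    split_ifs at this <;> omega
  obtain ⟨i0, hi0⟩ : ∃ j : Fin (S+1), k.succAbove j = k - 1 :=
    Fin.exists_succAbove_eq hne
  have hsum := Fin.sum_univ_succAbove (fun j => if f (j + 1) < f j then (1:ℕ) else 0) k
  have hrest : ∀ i ∈ Finset.univ.erase i0,
      (if (f ∘ k.succAbove) (i + 1) < (f ∘ k.succAbove) i then (1:ℕ) else 0)
        = (if f (k.succAbove i + 1) < f (k.succAbove i) then (1:ℕ) else 0) := by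
    intro i hi
    have hine : i ≠ i0 := (Finset.mem_erase.mp hi).1
    have h1 : k.succAbove i + 1 ≠ k := by
      intro hcon
      apply hine
      have : k.succAbove i = k - 1 := eq_sub_of_add_eq hcon
      exact (Fin.succAbove_right_injective (p := k)) (this.trans hi0.symm)
    rw [Function.comp_apply, Function.comp_apply, SA1 k i h1]
  have e1 : dCnt (f ∘ k.succAbove)
      = (if f (k+1) < f (k-1) then 1 else 0)
        + ∑ i ∈ Finset.univ.erase i0,
            (if f (k.succAbove i + 1) < f (k.succAbove i) then (1:ℕ) else 0) := by
    rw [dCnt_sum]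
    rw [← Finset.add_sum_erase _ _ (Finset.mem_univ i0)]
    rw [Finset.sum_congr rfl hrest]
    congr 1
    have h2 : k.succAbove i0 + 1 = k := by rw [hi0, sub_add_cancel]
    rw [Function.comp_apply, Function.comp_apply, SA2 k i0 h2, hi0]
  have e2 : dCnt f
      = (if f (k+1) < f k then 1 else 0) + ((if f k < f (k-1) then 1 else 0)
        + ∑ i ∈ Finset.univ.erase i0,
            (if f (k.succAbove i + 1) < f (k.succAbove i) then (1:ℕ) else 0)) := by
    rw [dCnt_sum, hsum]
    congr 1
    rw [← Finset.add_sum_erase _ _ (Finset.mem_univ i0)]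
    congr 1
    rw [hi0, sub_add_cancel]
  rw [e1, e2]
  omega

lemma removal_id_u {S : ℕ} (f : Fin (S+2) → α) (k : Fin (S+2)) :
    uCnt (f ∘ k.succAbove) + (if f (k-1) < f k then 1 else 0)
      + (if f k < f (k+1) then 1 else 0)
    = uCnt f + (if f (k-1) < f (k+1) then 1 else 0) := by
  have h := removal_id_d (⇑toDual ∘ f) k
  have h2 : dCnt ((⇑toDual ∘ f) ∘ k.succAbove) = uCnt (f ∘ k.succAbove) :=
    uCnt_dual (f ∘ k.succAbove)
  rw [h2, uCnt_dual] at h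
  simpa only [Function.comp_apply, OrderDual.toDual_lt_toDual] using h

lemma removal_le_d {S : ℕ} (f : Fin (S+2) → α) (k : Fin (S+2)) :
    dCnt (f ∘ k.succAbove) ≤ dCnt f := by
  have h := removal_id_d f k
  by_cases hc : f (k+1) < f (k-1)
  · have hab : f (k+1) < f k ∨ f k < f (k-1) := by
      rcases lt_or_ge (f (k+1)) (f k) with h' | h'
      · left; exact h'
      · right; exact lt_of_le_of_lt h' hc
    rw [if_pos hc] at h
    rcases hab with h' | h'
    · rw [if_pos h'] at h; split_ifs at h <;> omega
    · rw [if_pos h'] at h; split_ifs at h <;> omega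
  · rw [if_neg hc] at h; split_ifs at h <;> omega

lemma removal_le_u {S : ℕ} (f : Fin (S+2) → α) (k : Fin (S+2)) :
    uCnt (f ∘ k.succAbove) ≤ uCnt f := by
  have h := removal_id_u f k
  by_cases hc : f (k-1) < f (k+1)
  · have hab : f (k-1) < f k ∨ f k < f (k+1) := by
      rcases lt_or_ge (f (k-1)) (f k) with h' | h'
      · left; exact h'
      · right; exact lt_of_le_of_lt h' hc
    rw [if_pos hc] at h
    rcases hab with h' | h'
    · rw [if_pos h'] at h; split_ifs at h <;> omega
    · rw [if_pos h'] at h; split_ifs at h <;> omega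
  · rw [if_neg hc] at h; split_ifs at h <;> omega

lemma step_half {S : ℕ} (f : Fin (S+2) → α)
    (hstrict : ∀ j : Fin (S+2), f (j+1) ≠ f j)
    (hd : 3 ≤ dCnt f) (hu : 2 ≤ uCnt f) :
    ∃ k : Fin (S+2), 2 ≤ dCnt (f ∘ k.succAbove) ∧ 2 ≤ uCnt (f ∘ k.succAbove) := by
  by_cases hadj : ∃ j : Fin (S+2), f (j+1) < f j ∧ f (j+1+1) < f (j+1)
  · obtain ⟨j, h1, h2⟩ := hadj
    refine ⟨j+1, ?_, ?_⟩
    · have hD := removal_id_d f (j+1)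
      rw [add_sub_cancel_right] at hD
      rw [if_pos h1, if_pos h2, if_pos (h2.trans h1)] at hD
      omega
    · have hU := removal_id_u f (j+1)
      rw [add_sub_cancel_right] at hU
      rw [if_neg (not_lt.2 h1.le), if_neg (not_lt.2 h2.le),
        if_neg (not_lt.2 (h2.trans h1).le)] at hU
      omega
  · push_neg at hadj
    have hasc' : ∀ j : Fin (S+2), f (j+1) < f j → f (j+1) < f (j+1+1) := by
      intro j hj
      rcases lt_trichotomy (f (j+1+1)) (f (j+1)) with h | h | h
      · exact absurd (hadj j hj) (not_le.2 h)
      · exact absurd h (hstrict (j+1))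
      · exact h
    have hinj : dCnt f ≤ uCnt f := by
      rw [dCnt_eq, uCnt_eq]
      apply Finset.card_le_card_of_injOn (fun j => j + 1)
      · intro j hj
        simp only [Finset.coe_filter, Set.mem_setOf_eq, Finset.mem_filter, Finset.mem_univ, true_and] at hj ⊢
        exact hasc' j hj
      · intro a _ b _ hab
        exact add_left_injective 1 hab
    have hpos : 0 < (Finset.univ.filter fun i : Fin (S+2) => f (i + 1) < f i).card := by
      rw [← dCnt_eq]; omega
    obtain ⟨j, hj⟩ := Finset.card_pos.mp hpos
    simp only [Finset.mem_filter, Finset.mem_univ, true_and] at hj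
    have hasc : f (j+1) < f (j+1+1) := hasc' j hj
    refine ⟨j+1, ?_, ?_⟩
    · have hD := removal_id_d f (j+1)
      rw [add_sub_cancel_right] at hD
      rw [if_pos hj, if_neg (not_lt.2 hasc.le)] at hD
      split_ifs at hD <;> omega
    · have hU := removal_id_u f (j+1)
      rw [add_sub_cancel_right] at hU
      rw [if_neg (not_lt.2 hj.le), if_pos hasc] at hU
      split_ifs at hU <;> omega

lemma step {S : ℕ} (hS : 3 ≤ S) (f : Fin (S+2) → α)
    (hd : 2 ≤ dCnt f) (hu : 2 ≤ uCnt f) :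
    ∃ k : Fin (S+2), 2 ≤ dCnt (f ∘ k.succAbove) ∧ 2 ≤ uCnt (f ∘ k.succAbove) := by
  by_cases hstrict : ∀ j : Fin (S+2), f (j+1) ≠ f j
  · have hsum : S + 2 ≤ dCnt f + uCnt f := by
      rw [dCnt_eq, uCnt_eq, ← Finset.card_union_of_disjoint]
      · have : ((Finset.univ.filter fun i : Fin (S+2) => f (i + 1) < f i) ∪
            (Finset.univ.filter fun i => f i < f (i + 1))) = Finset.univ := by
          apply Finset.eq_univ_of_forall
          intro i
          rw [Finset.mem_union, Finset.mem_filter, Finset.mem_filter]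
          rcases lt_or_gt_of_ne (hstrict i) with h | h
          · exact Or.inl ⟨Finset.mem_univ i, h⟩
          · exact Or.inr ⟨Finset.mem_univ i, h⟩
        rw [this, Finset.card_univ, Fintype.card_fin]
      · rw [Finset.disjoint_left]
        intro i hi hi'
        simp only [Finset.mem_filter] at hi hi'
        exact absurd hi'.2 (not_lt.2 hi.2.le)
    rcases (by omega : 3 ≤ dCnt f ∨ 3 ≤ uCnt f) with h3 | h3
    · exact step_half f hstrict h3 hu
    · have hstrict' : ∀ j : Fin (S+2), (⇑toDual ∘ f) (j+1) ≠ (⇑toDual ∘ f) j := by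
        intro j hcon
        exact hstrict j (OrderDual.toDual.injective hcon)
      obtain ⟨k, h1, h2⟩ := step_half (⇑toDual ∘ f) hstrict'
        (by rwa [uCnt_dual]) (by rw [dCnt_dual]; omega)
      refine ⟨k, ?_, ?_⟩
      · have : dCnt ((⇑toDual ∘ f) ∘ k.succAbove) = uCnt (f ∘ k.succAbove) :=
          uCnt_dual (f ∘ k.succAbove)
        have : uCnt ((⇑toDual ∘ f) ∘ k.succAbove) = dCnt (f ∘ k.succAbove) :=
          dCnt_dual (f ∘ k.succAbove)
        omega
      · have : dCnt ((⇑toDual ∘ f) ∘ k.succAbove) = uCnt (f ∘ k.succAbove) :=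
          uCnt_dual (f ∘ k.succAbove)
        omega
  · push_neg at hstrict
    obtain ⟨j, hj⟩ := hstrict
    refine ⟨j+1, ?_, ?_⟩
    · have hD := removal_id_d f (j+1)
      rw [add_sub_cancel_right, hj] at hD
      rw [if_neg (lt_irrefl _)] at hD
      split_ifs at hD <;> omega
    · have hU := removal_id_u f (j+1)
      rw [add_sub_cancel_right, hj] at hU
      rw [if_neg (lt_irrefl _)] at hU
      split_ifs at hU <;> omega

lemma sm4_eq_id (u : Fin 4 → Fin 4) (hu : StrictMono u) : u = id := by
  have hsurj : Function.Surjective u := Finite.injective_iff_surjective.mp hu.injective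
  exact (StrictMono.range_inj hu strictMono_id).mp
    (by rw [hsurj.range_eq, Set.range_id])

lemma comb : ∀ (t : ℕ) (f : Fin t → α), 2 ≤ dCnt f → 2 ≤ uCnt f →
    ∃ u : Fin 4 → Fin t, StrictMono u ∧ 2 ≤ dCnt (f ∘ u) ∧ 2 ≤ uCnt (f ∘ u) := by
  intro t
  induction t using Nat.strong_induction_on with
  | _ t ih =>
    intro f hd hu
    have hle := dCnt_add_uCnt_le f
    rcases Nat.lt_or_ge t 5 with h5 | h5
    · have ht : t = 4 := by omega
      subst ht
      exact ⟨id, strictMono_id,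
        by rwa [Function.comp_id], by rwa [Function.comp_id]⟩
    · obtain ⟨S, rfl⟩ : ∃ S, t = S + 2 := ⟨t - 2, by omega⟩
      obtain ⟨k, h1, h2⟩ := step (by omega) f hd hu
      obtain ⟨u', hu', hd', hu2'⟩ := ih (S+1) (by omega) (f ∘ k.succAbove) h1 h2
      exact ⟨k.succAbove ∘ u', (Fin.strictMono_succAbove k).comp hu', hd', hu2'⟩

lemma restr_le : ∀ (t : ℕ) (f : Fin t → α) (u : Fin 4 → Fin t), StrictMono u →
    dCnt (f ∘ u) ≤ dCnt f ∧ uCnt (f ∘ u) ≤ uCnt f := by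
  intro t
  induction t using Nat.strong_induction_on with
  | _ t ih =>
    intro f u hu
    have h01 : u 0 < u 1 := hu (by decide)
    have h12 : u 1 < u 2 := hu (by decide)
    have h23 : u 2 < u 3 := hu (by decide)
    have hv3 := (u 3).isLt
    have hv01 : (u 0).val < (u 1).val := h01
    have hv12 : (u 1).val < (u 2).val := h12
    have hv23 : (u 2).val < (u 3).val := h23
    rcases Nat.lt_or_ge t 5 with h5 | h5
    · have ht : t = 4 := by omega
      subst ht
      rw [sm4_eq_id u hu, Function.comp_id]
      exact ⟨le_refl _, le_refl _⟩
    · obtain ⟨S, rfl⟩ : ∃ S, t = S + 2 := ⟨t - 2, by omega⟩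
      have hk : ∃ k : Fin (S+2), ∀ i, u i ≠ k := by
        by_contra hcon
        push_neg at hcon
        have hsub : (Finset.univ : Finset (Fin (S+2))) ⊆
            Finset.univ.image u := by
          intro k _
          obtain ⟨i, hi⟩ := hcon k
          exact Finset.mem_image.mpr ⟨i, Finset.mem_univ i, hi⟩
        have := Finset.card_le_card hsub
        have h4 : (Finset.univ.image u).card ≤ (Finset.univ : Finset (Fin 4)).card :=
          Finset.card_image_le
        simp only [Finset.card_univ, Fintype.card_fin] at this h4
        omega
      obtain ⟨k, hkne⟩ := hk
      have hex : ∀ i, ∃ j : Fin (S+1), k.succAbove j = u i := fun i =>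
        Fin.exists_succAbove_eq (hkne i)
      choose u' hu'2 using hex
      have hmono : StrictMono u' := by
        intro i j hij
        have : k.succAbove (u' i) < k.succAbove (u' j) := by
          rw [hu'2, hu'2]; exact hu hij
        exact (Fin.strictMono_succAbove k).lt_iff_lt.mp this
      have hcomp : f ∘ u = (f ∘ k.succAbove) ∘ u' := by
        funext i
        simp only [Function.comp_apply, hu'2]
      rw [hcomp]
      obtain ⟨hd', hu2'⟩ := ih (S+1) (by omega) (f ∘ k.succAbove) u' hmono
      exact ⟨hd'.trans (removal_le_d f k), hu2'.trans (removal_le_u f k)⟩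

end OrientedAux


/-- A partial transformation of {1,…,n}, given by its images f : Fin t → Fin n
listed in increasing order of the domain, is oriented iff every restriction
to a four-element subset of its domain is oriented. -/
theorem por_iff_restrictions_width_four {n t : ℕ} (f : Fin t → Fin n) :
    IsOrientedSeq f ↔
      ∀ u : Fin 4 → Fin t, StrictMono u → IsOrientedSeq (f ∘ u) := by
  have hOr : ∀ (s : ℕ) (a : Fin s → Fin n),
      IsOrientedSeq a ↔ (dCnt a ≤ 1 ∨ uCnt a ≤ 1) := fun s a => Iff.rfl
  constructor
  · intro h u hu
    rw [hOr] at h ⊢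
    obtain ⟨hd, hu2⟩ := restr_le t f u hu
    omega
  · intro hall
    rw [hOr]
    by_contra hno
    push_neg at hno
    obtain ⟨u, hu, hd, hu2⟩ := comb t f (by omega) (by omega)
    have := (hOr 4 (f ∘ u)).mp (hall u hu)
    omega
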